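/- arXiv:1902.04004 — 2 statements merged into one kernel-verified Lean document; each statement's English description precedes it below -/
import Mathlib

section
/- Let N items be distributed among M slots with n_j ≤ b items in slot j for every j, where b = ⌈N/M⌉ and Σ_j n_j = N. Then Σ_{j=1}^M n_j^2 ≤ ⌊N/b⌋·b^2 + (N − ⌊N/b⌋·b)^2. -/
lemma key_step (b a m : ℕ) (hb : 0 < b) (ha : a ≤ b) :
    a ^ 2 + ((m / b) * b ^ 2 + (m % b) ^ 2) ≤
      ((m + a) / b) * b ^ 2 + ((m + a) % b) ^ 2 := by
  set q := m / b with hq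
  set r := m % b with hr
  have hrb : r < b := Nat.mod_lt _ hb
  have hm : b * q + r = m := Nat.div_add_mod m b
  obtain ⟨t, ht⟩ : ∃ t, t = b * q := ⟨_, rfl⟩
  rw [← ht] at hm
  rcases lt_or_ge (r + a) b with hlt | hge
  · have e1 : m + a = t + (r + a) := by omega
    have h1 : (m + a) / b = q := by
      rw [e1, ht, Nat.mul_add_div hb, Nat.div_eq_of_lt hlt, Nat.add_zero]
    have h2 : (m + a) % b = r + a := by
      rw [e1, ht, Nat.mul_add_mod, Nat.mod_eq_of_lt hlt]
    rw [h1, h2]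
    nlinarith
  · have hs : r + a - b < b := by omega
    have e2 : m + a = b * (q + 1) + (r + a - b) := by
      rw [Nat.mul_add, Nat.mul_one, ← ht]; omega
    have h2 : (m + a) / b = q + 1 := by
      rw [e2, Nat.mul_add_div hb, Nat.div_eq_of_lt hs]
    have h3 : (m + a) % b = r + a - b := by
      rw [e2, Nat.mul_add_mod, Nat.mod_eq_of_lt hs]
    rw [h2, h3]
    obtain ⟨d, hd⟩ : ∃ d, b = a + d := ⟨b - a, by omega⟩
    obtain ⟨s, hsd1, hsd2⟩ : ∃ s, r = s + d ∧ r + a - b = s := ⟨r + a - b, by omega, rfl⟩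
    have hsa : s ≤ a := by omega
    rw [hsd2, hd, hsd1]
    nlinarith

lemma aux_sum {ι : Type*} (b : ℕ) (hb : 0 < b) (s : Finset ι) (n : ι → ℕ)
    (hcap : ∀ j ∈ s, n j ≤ b) :
    ∑ j ∈ s, n j ^ 2 ≤
      ((∑ j ∈ s, n j) / b) * b ^ 2 + ((∑ j ∈ s, n j) % b) ^ 2 := by
  induction s using Finset.cons_induction with
  | empty => simp
  | cons a t ha ih =>
    rw [Finset.sum_cons, Finset.sum_cons]
    have ih' := ih (fun j hj => hcap j (Finset.mem_cons_of_mem hj))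
    calc n a ^ 2 + ∑ j ∈ t, n j ^ 2
        ≤ n a ^ 2 + (((∑ j ∈ t, n j) / b) * b ^ 2 + ((∑ j ∈ t, n j) % b) ^ 2) := by
          omega
      _ ≤ (((∑ j ∈ t, n j) + n a) / b) * b ^ 2 + (((∑ j ∈ t, n j) + n a) % b) ^ 2 :=
          key_step b (n a) _ hb (hcap a (Finset.mem_cons_self a t))
      _ = _ := by rw [Nat.add_comm (∑ j ∈ t, n j) (n a)]

/-- Upper bound on the sum of squares of slot counts under capacity `b = ⌈N/M⌉`:
it is maximized when `⌊N/b⌋` slots are filled to capacity and the remainder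
goes to one slot. -/
theorem sum_sq_upper_bound (M N : ℕ) (hM : 0 < M) (hN : 0 < N)
    (n : Fin M → ℕ) (h : ∑ j, n j = N)
    (b : ℕ) (hb : b = ⌈(N : ℚ) / (M : ℚ)⌉₊)
    (hcap : ∀ j, n j ≤ b) :
    ∑ j, (n j) ^ 2 ≤ (N / b) * b ^ 2 + (N - (N / b) * b) ^ 2 := by
  have hbpos : 0 < b := by
    rw [hb]
    refine Nat.ceil_pos.mpr ?_
    positivity
  have key := aux_sum b hbpos Finset.univ n (fun j _ => hcap j)
  rw [h] at key
  have hdm : (N / b) * b + N % b = N := by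
    rw [Nat.mul_comm]; exact Nat.div_add_mod N b
  have hmod : N % b = N - (N / b) * b := by omega
  rwa [hmod] at key
end

section
/- Let N, M ≥ 1, b = ⌈N/M⌉ ≥ 2. Define f* = M·b^2 − (2b−1)(M·b − N) and f̂ = b(N + b). Then (f̂ − f*)/f* ≤ 1, i.e., f̂ ≤ 2·f*. -/
/-- Approximation-ratio bound: with `b = ⌈N/M⌉ ≥ 2`,
`f* = M·b² − (2b−1)(Mb − N)` and `f̂ = b(N + b)`, one has `f̂ ≤ 2·f*`. -/
theorem approx_ratio_le_one (N M b : ℤ) (hN : 1 ≤ N) (hM : 1 ≤ M)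
    (hb : b = ⌈(N : ℚ) / (M : ℚ)⌉) (hb2 : 2 ≤ b) :
    b * (N + b) ≤ 2 * (M * b ^ 2 - (2 * b - 1) * (M * b - N)) := by
  have hMQ : (0 : ℚ) < (M : ℚ) := by exact_mod_cast hM.trans_lt' (by norm_num)
  have h1 : (N : ℚ) / (M : ℚ) ≤ (b : ℚ) := hb ▸ Int.le_ceil _
  have h2 : ((b - 1 : ℤ) : ℚ) < (N : ℚ) / (M : ℚ) := by
    rw [Int.lt_ceil.symm, ← hb]; omega
  have hub : (N : ℚ) ≤ (M : ℚ) * (b : ℚ) := by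
    rw [div_le_iff₀ hMQ] at h1; linarith [h1]
  have hlb : (M : ℚ) * ((b : ℚ) - 1) < (N : ℚ) := by
    rw [lt_div_iff₀ hMQ] at h2; push_cast at h2; linarith
  have hubZ : N ≤ M * b := by exact_mod_cast hub
  have hlbZ : M * (b - 1) < N := by exact_mod_cast hlb
  nlinarith [mul_nonneg (mul_nonneg (by linarith : (0:ℤ) ≤ M - 1) (by linarith : (0:ℤ) ≤ b - 1)) (by linarith : (0:ℤ) ≤ b - 2), hlbZ, hubZ]
end
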